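/- Let Λ ⊂ ℝ^N be a lattice of rank 3 with successive minima λ1 ≤ λ2 ≤ λ3. Then there exists a ℤ-basis x1, x2, x3 of Λ with ‖xi‖ = λi for i = 1, 2, 3 such that the pairwise angles θij between xi and xj satisfy π/3 ≤ θ12 ≤ π/2, π/3 ≤ θ13 ≤ π/2, and π/3 ≤ θ23 ≤ 2π/3. -/

import Mathlib

open Real InnerProductGeometry

/-- The `i`-th successive minimum of a lattice `Λ ⊆ ℝ^N`:
`λ_i = inf {μ > 0 : the closed ball of radius μ contains i linearly independent vectors of Λ}`. -/
noncomputable def succMin {N : ℕ} (Λ : Submodule ℤ (EuclideanSpace ℝ (Fin N))) (i : ℕ) : ℝ :=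
  sInf {μ : ℝ | 0 < μ ∧ ∃ v : Fin i → EuclideanSpace ℝ (Fin N),
    (∀ k, v k ∈ Λ) ∧ LinearIndependent ℝ v ∧ ∀ k, ‖v k‖ ≤ μ}

open scoped RealInnerProductSpace

private lemma set_triple_eq_range' {E : Type*} (x1 x2 x3 : E) :
    ({x1, x2, x3} : Set E) = Set.range ![x1, x2, x3] := by
  ext v
  constructor
  · rintro (rfl | rfl | rfl)
    · exact ⟨0, rfl⟩
    · exact ⟨1, rfl⟩
    · exact ⟨2, rfl⟩
  · rintro ⟨i, rfl⟩
    fin_cases i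
    · exact Or.inl rfl
    · exact Or.inr (Or.inl rfl)
    · exact Or.inr (Or.inr rfl)

private lemma li3_of_not_mem {E : Type*} [AddCommGroup E] [Module ℝ E] {x1 x2 x3 : E}
    (h1 : x1 ≠ 0) (h2 : x2 ∉ Submodule.span ℝ ({x1} : Set E))
    (h3 : x3 ∉ Submodule.span ℝ ({x1, x2} : Set E)) :
    LinearIndependent ℝ ![x1, x2, x3] := by
  rw [Fintype.linearIndependent_iff]
  intro g hg
  rw [Fin.sum_univ_three] at hg
  simp only [Matrix.cons_val_zero, Matrix.cons_val_one, Matrix.head_cons,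
    Matrix.cons_val_two, Matrix.tail_cons] at hg
  have hmem12 : x1 ∈ Submodule.span ℝ ({x1, x2} : Set E) :=
    Submodule.subset_span (Or.inl rfl)
  have hmem22 : x2 ∈ Submodule.span ℝ ({x1, x2} : Set E) :=
    Submodule.subset_span (Or.inr rfl)
  have hg2 : g 2 = 0 := by
    by_contra h
    apply h3
    rw [← Submodule.smul_mem_iff _ h]
    have heq : g 2 • x3 = -(g 0 • x1) - g 1 • x2 := by
      linear_combination (norm := module) hg
    rw [heq]
    exact sub_mem (neg_mem (Submodule.smul_mem _ _ hmem12)) (Submodule.smul_mem _ _ hmem22)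
  rw [hg2, zero_smul, add_zero] at hg
  have hg1 : g 1 = 0 := by
    by_contra h
    apply h2
    rw [← Submodule.smul_mem_iff _ h]
    have heq : g 1 • x2 = -(g 0 • x1) := by
      linear_combination (norm := module) hg
    rw [heq]
    exact neg_mem (Submodule.smul_mem _ _ (Submodule.mem_span_singleton_self x1))
  rw [hg1, zero_smul, add_zero] at hg
  have hg0 : g 0 = 0 := by
    rcases smul_eq_zero.mp hg with h | h
    · exact h
    · exact absurd h h1
  intro i; fin_cases i <;> assumption

private lemma inner_eq_zero_of_mem_span {N : ℕ} {u : EuclideanSpace ℝ (Fin N)}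
    {s : Set (EuclideanSpace ℝ (Fin N))} (h : ∀ x ∈ s, ⟪u, x⟫ = 0) :
    ∀ v ∈ Submodule.span ℝ s, ⟪u, v⟫ = 0 := by
  intro v hv
  induction hv using Submodule.span_induction with
  | mem x hx => exact h x hx
  | zero => simp
  | add x y _ _ hx hy => rw [inner_add_right, hx, hy, add_zero]
  | smul a x _ hx => rw [real_inner_smul_right, hx, mul_zero]

private lemma exists_min_off {N : ℕ} (Λ : Submodule ℤ (EuclideanSpace ℝ (Fin N)))
    (hfin : ∀ R : ℝ, {v | v ∈ Λ ∧ ‖v‖ ≤ R}.Finite)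
    (S : Set (EuclideanSpace ℝ (Fin N))) (w : EuclideanSpace ℝ (Fin N))
    (hw : w ∈ Λ) (hwS : w ∉ S) :
    ∃ x, x ∈ Λ ∧ x ∉ S ∧ ∀ v ∈ Λ, v ∉ S → ‖x‖ ≤ ‖v‖ := by
  have hfin' : {v | (v ∈ Λ ∧ v ∉ S) ∧ ‖v‖ ≤ ‖w‖}.Finite :=
    (hfin ‖w‖).subset (by rintro v ⟨⟨h1, _⟩, h2⟩; exact ⟨h1, h2⟩)
  obtain ⟨x, hx, hmin⟩ := Set.exists_min_image _ (fun v => ‖v‖) hfin' ⟨w, ⟨hw, hwS⟩, le_refl _⟩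
  refine ⟨x, hx.1.1, hx.1.2, ?_⟩
  intro v hvΛ hvS
  by_cases hc : ‖v‖ ≤ ‖w‖
  · exact hmin v ⟨⟨hvΛ, hvS⟩, hc⟩
  · exact (hmin w ⟨⟨hw, hwS⟩, le_refl _⟩).trans (le_of_not_ge hc)

private lemma finite_ball {N : ℕ} (b : Fin 3 → EuclideanSpace ℝ (Fin N))
    (hb : LinearIndependent ℝ b) (R : ℝ) :
    {v : EuclideanSpace ℝ (Fin N) | v ∈ Submodule.span ℤ (Set.range b) ∧ ‖v‖ ≤ R}.Finite := by
  classical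
  let T : (Fin 3 → ℝ) →ₗ[ℝ] EuclideanSpace ℝ (Fin N) := Fintype.linearCombination ℝ b
  have hT : ∀ c : Fin 3 → ℝ, T c = ∑ i, c i • b i := fun c => by
    simp [T, Fintype.linearCombination_apply]
  have hinj : Function.Injective T := by
    rw [← LinearMap.ker_eq_bot, LinearMap.ker_eq_bot']
    intro c hc
    funext i
    exact Fintype.linearIndependent_iff.mp hb c (by rw [← hT]; exact hc) i
  let e : (Fin 3 → ℝ) ≃ₗ[ℝ] LinearMap.range T := LinearEquiv.ofInjective T hinj
  let f : LinearMap.range T →L[ℝ] (Fin 3 → ℝ) :=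
    LinearMap.toContinuousLinearMap (e.symm : LinearMap.range T →ₗ[ℝ] (Fin 3 → ℝ))
  set K := ‖f‖ with hK
  have hbound : ∀ n : Fin 3 → ℤ, ‖(∑ i, n i • b i : EuclideanSpace ℝ (Fin N))‖ ≤ R →
      ∀ i, |(n i : ℝ)| ≤ K * R := by
    intro n hn i
    set v : EuclideanSpace ℝ (Fin N) := ∑ i, n i • b i with hv
    have hTv : T (fun i => (n i : ℝ)) = v := by
      rw [hT, hv]
      exact Finset.sum_congr rfl fun i _ => Int.cast_smul_eq_zsmul ℝ (n i) (b i)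
    have hvr : v ∈ LinearMap.range T := ⟨fun i => (n i : ℝ), hTv⟩
    have hes : (e fun i => (n i : ℝ)) = ⟨v, hvr⟩ := by
      apply Subtype.ext
      rw [LinearEquiv.ofInjective_apply]
      exact hTv
    have hes' : e.symm ⟨v, hvr⟩ = fun i => (n i : ℝ) := by
      rw [← hes, LinearEquiv.symm_apply_apply]
    have h1 : ‖e.symm ⟨v, hvr⟩‖ ≤ K * ‖v‖ := f.le_opNorm ⟨v, hvr⟩
    have h2 : |(n i : ℝ)| ≤ ‖e.symm ⟨v, hvr⟩‖ := by
      rw [hes']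
      exact (norm_le_pi_norm (fun i => (n i : ℝ)) i).trans_eq' (Real.norm_eq_abs _).symm
    calc |(n i : ℝ)| ≤ K * ‖v‖ := h2.trans h1
      _ ≤ K * R := by
          apply mul_le_mul_of_nonneg_left hn
          rw [hK]; exact norm_nonneg f
  have hfin : {n : Fin 3 → ℤ | ∀ i, |(n i : ℝ)| ≤ K * R}.Finite := by
    apply Set.Finite.subset (Set.Finite.pi (t := fun _ : Fin 3 => {m : ℤ | |(m : ℝ)| ≤ K * R}) ?_)
    · intro n hn
      rw [Set.mem_pi]
      intro i _
      exact hn i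
    · intro i
      apply Set.Finite.subset (Set.finite_Icc (-⌈K * R⌉) ⌈K * R⌉)
      intro m hm
      simp only [Set.mem_setOf_eq, abs_le] at hm
      have hceil := Int.le_ceil (K * R)
      constructor
      · have : ((-⌈K * R⌉ : ℤ) : ℝ) ≤ (m : ℝ) := by push_cast; linarith [hm.1]
        exact_mod_cast this
      · have : ((m : ℤ) : ℝ) ≤ ((⌈K * R⌉ : ℤ) : ℝ) := by push_cast; linarith [hm.2]
        exact_mod_cast this
  apply Set.Finite.subset
    (hfin.image (fun n : Fin 3 → ℤ => (∑ i, n i • b i : EuclideanSpace ℝ (Fin N))))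
  rintro v ⟨hvΛ, hvR⟩
  obtain ⟨n, hn⟩ := (Submodule.mem_span_range_iff_exists_fun ℤ).mp hvΛ
  exact ⟨n, hbound n (by rw [hn]; exact hvR), hn⟩

set_option maxHeartbeats 3200000 in

/-- Every lattice `Λ ⊆ ℝ^N` of rank 3 with successive minima `λ1 ≤ λ2 ≤ λ3`
has a `ℤ`-basis `x1, x2, x3` with `‖xi‖ = λi` for `i = 1, 2, 3` whose pairwise angles
satisfy `π/3 ≤ θ12 ≤ π/2`, `π/3 ≤ θ13 ≤ π/2`, and `π/3 ≤ θ23 ≤ 2π/3`. -/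
theorem exists_minimal_basis_rank_three {N : ℕ}
    (b1 b2 b3 : EuclideanSpace ℝ (Fin N)) (hb : LinearIndependent ℝ ![b1, b2, b3])
    (Λ : Submodule ℤ (EuclideanSpace ℝ (Fin N)))
    (hΛ : Λ = Submodule.span ℤ ({b1, b2, b3} : Set (EuclideanSpace ℝ (Fin N))))
    (lam1 lam2 lam3 : ℝ)
    (h1 : lam1 = succMin Λ 1) (h2 : lam2 = succMin Λ 2) (h3 : lam3 = succMin Λ 3)
    (hle12 : lam1 ≤ lam2) (hle23 : lam2 ≤ lam3) :
    ∃ x1 ∈ Λ, ∃ x2 ∈ Λ, ∃ x3 ∈ Λ,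
      LinearIndependent ℝ ![x1, x2, x3] ∧
      Submodule.span ℤ ({x1, x2, x3} : Set (EuclideanSpace ℝ (Fin N))) = Λ ∧
      ‖x1‖ = lam1 ∧ ‖x2‖ = lam2 ∧ ‖x3‖ = lam3 ∧
      π / 3 ≤ angle x1 x2 ∧ angle x1 x2 ≤ π / 2 ∧
      π / 3 ≤ angle x1 x3 ∧ angle x1 x3 ≤ π / 2 ∧
      π / 3 ≤ angle x2 x3 ∧ angle x2 x3 ≤ 2 * π / 3 := by
  classical
  have hfinΛ : ∀ R : ℝ, {v | v ∈ Λ ∧ ‖v‖ ≤ R}.Finite := by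
    intro R
    rw [hΛ, set_triple_eq_range']
    exact finite_ball ![b1, b2, b3] hb R
  have hb1Λ : b1 ∈ Λ := by rw [hΛ]; exact Submodule.subset_span (by simp)
  have hb2Λ : b2 ∈ Λ := by rw [hΛ]; exact Submodule.subset_span (by simp)
  have hb3Λ : b3 ∈ Λ := by rw [hΛ]; exact Submodule.subset_span (by simp)
  have hb1ne : b1 ≠ 0 := by have := hb.ne_zero 0; simpa using this
  -- x1
  obtain ⟨x1, hx1Λ, hx1ne', hmin1'⟩ := exists_min_off Λ hfinΛ ({0} : Set _) b1 hb1Λ (by simpa)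
  have hx1ne : x1 ≠ 0 := by simpa using hx1ne'
  have hmin1 : ∀ v ∈ Λ, v ≠ 0 → ‖x1‖ ≤ ‖v‖ := fun v hv hvne => hmin1' v hv (by simpa)
  -- L1 and x2
  set L1 : Submodule ℝ (EuclideanSpace ℝ (Fin N)) := Submodule.span ℝ {x1} with hL1
  have hw2 : ∃ w, w ∈ Λ ∧ w ∉ L1 := by
    by_contra hcon
    push_neg at hcon
    have hle : Submodule.span ℝ (Set.range ![b1, b2, b3]) ≤ L1 := by
      rw [Submodule.span_le]
      rintro v ⟨i, rfl⟩
      fin_cases i <;>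
        simpa using hcon _ (by assumption)
    have h3le : (3 : ℕ) ≤ Module.finrank ℝ L1 := by
      have := Submodule.finrank_mono hle
      rwa [finrank_span_eq_card hb, Fintype.card_fin] at this
    rw [finrank_span_singleton hx1ne] at h3le
    omega
  obtain ⟨w2, hw2Λ, hw2L1⟩ := hw2
  obtain ⟨m2, hm2Λ, hm2L1, hmin2'⟩ := exists_min_off Λ hfinΛ (L1 : Set _) w2 hw2Λ hw2L1
  set x2 := if 0 ≤ ⟪x1, m2⟫ then m2 else -m2 with hx2def
  have hx2Λ : x2 ∈ Λ := by
    rw [hx2def]; split <;> [exact hm2Λ; exact neg_mem hm2Λ]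
  have hx2L1 : x2 ∉ L1 := by
    rw [hx2def]; split
    · exact hm2L1
    · intro h; exact hm2L1 (by simpa using neg_mem h)
  have hx2norm : ‖x2‖ = ‖m2‖ := by rw [hx2def]; split <;> simp
  have hip12 : 0 ≤ ⟪x1, x2⟫ := by
    rw [hx2def]; split
    · assumption
    · rw [inner_neg_right]; linarith [lt_of_not_ge (by assumption : ¬ 0 ≤ ⟪x1, m2⟫)]
  have hmin2 : ∀ v ∈ Λ, v ∉ L1 → ‖x2‖ ≤ ‖v‖ := by
    intro v hv hvn; rw [hx2norm]; exact hmin2' v hv hvn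
  have hx2ne : x2 ≠ 0 := fun h => hx2L1 (h ▸ zero_mem L1)
  -- P and x3
  set P : Submodule ℝ (EuclideanSpace ℝ (Fin N)) := Submodule.span ℝ {x1, x2} with hP
  have hx1P : x1 ∈ P := Submodule.subset_span (Or.inl rfl)
  have hx2P : x2 ∈ P := Submodule.subset_span (Or.inr rfl)
  have hfinrankP : Module.finrank ℝ P ≤ 2 := by
    have := finrank_span_le_card (R := ℝ) ({x1, x2} : Set (EuclideanSpace ℝ (Fin N)))
    refine this.trans ?_
    rw [Set.toFinset_insert, Set.toFinset_singleton]
    exact (Finset.card_insert_le _ _).trans (by simp)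
  have hw3 : ∃ w, w ∈ Λ ∧ w ∉ P := by
    by_contra hcon
    push_neg at hcon
    have hall : ∀ i, (![b1, b2, b3]) i ∈ P := by
      intro i; fin_cases i <;> simpa using hcon _ (by assumption)
    have hli : LinearIndependent ℝ (fun i => (⟨![b1, b2, b3] i, hall i⟩ : P)) :=
      LinearIndependent.of_comp P.subtype (by convert hb; funext i; rfl)
    have := hli.fintype_card_le_finrank
    rw [Fintype.card_fin] at this
    omega
  obtain ⟨w3, hw3Λ, hw3P⟩ := hw3
  obtain ⟨m3, hm3Λ, hm3P, hmin3'⟩ := exists_min_off Λ hfinΛ (P : Set _) w3 hw3Λ hw3P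
  set x3 := if 0 ≤ ⟪x1, m3⟫ then m3 else -m3 with hx3def
  have hx3Λ : x3 ∈ Λ := by
    rw [hx3def]; split <;> [exact hm3Λ; exact neg_mem hm3Λ]
  have hx3P : x3 ∉ P := by
    rw [hx3def]; split
    · exact hm3P
    · intro h; exact hm3P (by simpa using neg_mem h)
  have hx3norm : ‖x3‖ = ‖m3‖ := by rw [hx3def]; split <;> simp
  have hip13 : 0 ≤ ⟪x1, x3⟫ := by
    rw [hx3def]; split
    · assumption
    · rw [inner_neg_right]; linarith [lt_of_not_ge (by assumption : ¬ 0 ≤ ⟪x1, m3⟫)]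
  have hmin3 : ∀ v ∈ Λ, v ∉ P → ‖x3‖ ≤ ‖v‖ := by
    intro v hv hvn; rw [hx3norm]; exact hmin3' v hv hvn
  have hx3ne : x3 ≠ 0 := fun h => hx3P (h ▸ zero_mem P)
  have hL1P : L1 ≤ P := Submodule.span_mono (by
    intro a ha
    rw [Set.mem_singleton_iff] at ha
    exact ha ▸ Set.mem_insert _ _)
  have hx3L1 : x3 ∉ L1 := fun h => hx3P (hL1P h)
  -- lam1 = ‖x1‖
  have hlam1 : lam1 = ‖x1‖ := by
    rw [h1]
    unfold succMin
    have hmem : ‖x1‖ ∈ {μ : ℝ | 0 < μ ∧ ∃ v : Fin 1 → EuclideanSpace ℝ (Fin N),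
        (∀ k, v k ∈ Λ) ∧ LinearIndependent ℝ v ∧ ∀ k, ‖v k‖ ≤ μ} := by
      refine ⟨norm_pos_iff.mpr hx1ne, fun _ => x1, fun _ => hx1Λ, ?_, fun _ => le_refl _⟩
      exact linearIndependent_unique_iff.mpr hx1ne
    apply le_antisymm
    · exact csInf_le ⟨0, fun μ hμ => le_of_lt hμ.1⟩ hmem
    · apply le_csInf ⟨_, hmem⟩
      rintro μ ⟨hμ, v, hvΛ, hvli, hvle⟩
      exact (hmin1 (v 0) (hvΛ 0) (hvli.ne_zero 0)).trans (hvle 0)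
  have hlam1pos : 0 < lam1 := hlam1 ▸ norm_pos_iff.mpr hx1ne
  -- lam2 = ‖x2‖
  have hn12 : ‖x1‖ ≤ ‖x2‖ := hmin1 x2 hx2Λ hx2ne
  have hli2 : LinearIndependent ℝ ![x1, x2] := by
    rw [linearIndependent_fin2]
    refine ⟨by simpa using hx2ne, ?_⟩
    intro a ha
    simp only [Matrix.cons_val_one, Matrix.head_cons, Matrix.cons_val_zero] at ha
    have hane : a ≠ 0 := by rintro rfl; rw [zero_smul] at ha; exact hx1ne ha.symm
    apply hx2L1
    rw [hL1, Submodule.mem_span_singleton]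
    exact ⟨a⁻¹, by rw [← ha, smul_smul, inv_mul_cancel₀ hane, one_smul]⟩
  have hlam2 : lam2 = ‖x2‖ := by
    rw [h2]
    unfold succMin
    have hmem : ‖x2‖ ∈ {μ : ℝ | 0 < μ ∧ ∃ v : Fin 2 → EuclideanSpace ℝ (Fin N),
        (∀ k, v k ∈ Λ) ∧ LinearIndependent ℝ v ∧ ∀ k, ‖v k‖ ≤ μ} := by
      refine ⟨norm_pos_iff.mpr hx2ne, ![x1, x2], ?_, hli2, ?_⟩
      · intro k; fin_cases k <;> simpa using (by assumption)
      · intro k; fin_cases k <;> simp [hn12]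
    apply le_antisymm
    · exact csInf_le ⟨0, fun μ hμ => le_of_lt hμ.1⟩ hmem
    · apply le_csInf ⟨_, hmem⟩
      rintro μ ⟨hμ, v, hvΛ, hvli, hvle⟩
      have : ∃ k, v k ∉ L1 := by
        by_contra hcon
        push_neg at hcon
        obtain ⟨a, ha⟩ := Submodule.mem_span_singleton.mp (hcon 0)
        obtain ⟨c, hc⟩ := Submodule.mem_span_singleton.mp (hcon 1)
        obtain ⟨hv1ne, hnosmul⟩ := linearIndependent_fin2.mp hvli
        have hcne : c ≠ 0 := by rintro rfl; rw [zero_smul] at hc; exact hv1ne hc.symm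
        exact hnosmul (a / c) (by rw [← hc, smul_smul, div_mul_cancel₀ a hcne, ha])
      obtain ⟨k, hk⟩ := this
      exact (hmin2 (v k) (hvΛ k) hk).trans (hvle k)
  have hlam2pos : 0 < lam2 := hlam2 ▸ norm_pos_iff.mpr hx2ne
  -- lam3 = ‖x3‖
  have hn13 : ‖x1‖ ≤ ‖x3‖ := hmin1 x3 hx3Λ hx3ne
  have hn23 : ‖x2‖ ≤ ‖x3‖ := hmin2 x3 hx3Λ hx3L1
  have hli3 : LinearIndependent ℝ ![x1, x2, x3] := li3_of_not_mem hx1ne hx2L1 hx3P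
  have hlam3 : lam3 = ‖x3‖ := by
    rw [h3]
    unfold succMin
    have hmem : ‖x3‖ ∈ {μ : ℝ | 0 < μ ∧ ∃ v : Fin 3 → EuclideanSpace ℝ (Fin N),
        (∀ k, v k ∈ Λ) ∧ LinearIndependent ℝ v ∧ ∀ k, ‖v k‖ ≤ μ} := by
      refine ⟨norm_pos_iff.mpr hx3ne, ![x1, x2, x3], ?_, hli3, ?_⟩
      · intro k; fin_cases k <;> simpa using (by assumption)
      · intro k; fin_cases k <;> simp [hn13, hn23]
    apply le_antisymm
    · exact csInf_le ⟨0, fun μ hμ => le_of_lt hμ.1⟩ hmem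
    · apply le_csInf ⟨_, hmem⟩
      rintro μ ⟨hμ, v, hvΛ, hvli, hvle⟩
      have : ∃ k, v k ∉ P := by
        by_contra hcon
        push_neg at hcon
        have hli : LinearIndependent ℝ (fun i => (⟨v i, hcon i⟩ : P)) :=
          LinearIndependent.of_comp P.subtype (by convert hvli; funext i; rfl)
        have := hli.fintype_card_le_finrank
        rw [Fintype.card_fin] at this
        omega
      obtain ⟨k, hk⟩ := this
      exact (hmin3 (v k) (hvΛ k) hk).trans (hvle k)
  have hlam3pos : 0 < lam3 := hlam3 ▸ norm_pos_iff.mpr hx3ne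
  -- ℝ-span coordinates
  have hΛV : ∀ v ∈ Λ, v ∈ Submodule.span ℝ ({b1, b2, b3} : Set (EuclideanSpace ℝ (Fin N))) := by
    intro v hv
    rw [hΛ] at hv
    exact Submodule.span_subset_span ℤ ℝ _ hv
  have hxV : Submodule.span ℝ ({x1, x2, x3} : Set (EuclideanSpace ℝ (Fin N)))
      = Submodule.span ℝ ({b1, b2, b3} : Set (EuclideanSpace ℝ (Fin N))) := by
    apply Submodule.eq_of_le_of_finrank_le
    · rw [Submodule.span_le]
      rintro v (rfl | rfl | rfl)
      · exact hΛV _ hx1Λ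
      · exact hΛV _ hx2Λ
      · exact hΛV _ hx3Λ
    · have e1 : Module.finrank ℝ
          (Submodule.span ℝ ({b1, b2, b3} : Set (EuclideanSpace ℝ (Fin N)))) = 3 := by
        rw [set_triple_eq_range', finrank_span_eq_card hb, Fintype.card_fin]
      have e2 : Module.finrank ℝ
          (Submodule.span ℝ ({x1, x2, x3} : Set (EuclideanSpace ℝ (Fin N)))) = 3 := by
        rw [set_triple_eq_range', finrank_span_eq_card hli3, Fintype.card_fin]
      rw [e1, e2]
  have hVcoord : ∀ v ∈ Λ, ∃ α : Fin 3 → ℝ, α 0 • x1 + α 1 • x2 + α 2 • x3 = v := by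
    intro v hv
    have hv' : v ∈ Submodule.span ℝ (Set.range ![x1, x2, x3]) := by
      rw [← set_triple_eq_range', hxV]
      exact hΛV v hv
    obtain ⟨α, hα⟩ := (Submodule.mem_span_range_iff_exists_fun ℝ).mp hv'
    refine ⟨α, ?_⟩
    rw [← hα, Fin.sum_univ_three]
    simp
  -- Gram-Schmidt
  set q1 : ℝ := ⟪x1, x1⟫ with hq1def
  have hq1pos : 0 < q1 := by rw [hq1def, real_inner_self_eq_norm_sq]; exact pow_pos (norm_pos_iff.mpr hx1ne) 2
  set u2 : EuclideanSpace ℝ (Fin N) := x2 - (⟪x1, x2⟫ / q1) • x1 with hu2def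
  have horth12 : ⟪x1, u2⟫ = 0 := by
    rw [hu2def, inner_sub_right, real_inner_smul_right, ← hq1def]
    field_simp
    ring
  have hx2eq : x2 = u2 + (⟪x1, x2⟫ / q1) • x1 := by rw [hu2def]; abel
  have hu2ne : u2 ≠ 0 := by
    intro h
    apply hx2L1
    rw [hL1, Submodule.mem_span_singleton]
    refine ⟨⟪x1, x2⟫ / q1, ?_⟩
    have heq : x2 = (⟪x1, x2⟫ / q1) • x1 := by
      conv_lhs => rw [hx2eq]
      rw [h, zero_add]
    exact heq.symm
  set q2 : ℝ := ⟪u2, u2⟫ with hq2def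
  have hq2pos : 0 < q2 := by rw [hq2def, real_inner_self_eq_norm_sq]; exact pow_pos (norm_pos_iff.mpr hu2ne) 2
  have hip_u2x1 : ⟪u2, x1⟫ = 0 := by rw [real_inner_comm]; exact horth12
  set a31 : ℝ := ⟪x1, x3⟫ / q1 with ha31def
  set a32 : ℝ := ⟪u2, x3⟫ / q2 with ha32def
  set u3 : EuclideanSpace ℝ (Fin N) := x3 - a31 • x1 - a32 • u2 with hu3def
  have hx3eq : x3 = u3 + a31 • x1 + a32 • u2 := by rw [hu3def]; abel
  have horth13 : ⟪x1, u3⟫ = 0 := by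
    rw [hu3def, inner_sub_right, inner_sub_right, real_inner_smul_right, real_inner_smul_right,
      horth12, ha31def, ← hq1def]
    field_simp
    ring
  have horth23 : ⟪u2, u3⟫ = 0 := by
    rw [hu3def, inner_sub_right, inner_sub_right, real_inner_smul_right, real_inner_smul_right,
      hip_u2x1, ha32def, ← hq2def]
    field_simp
    ring
  have hu2P : u2 ∈ P := sub_mem hx2P (Submodule.smul_mem _ _ hx1P)
  have hu3P : u3 ∉ P := by
    intro h
    apply hx3P
    rw [hx3eq]
    exact add_mem (add_mem h (Submodule.smul_mem _ _ hx1P)) (Submodule.smul_mem _ _ hu2P)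
  have hu3ne : u3 ≠ 0 := fun h => hu3P (h ▸ zero_mem P)
  set q3 : ℝ := ⟪u3, u3⟫ with hq3def
  have hq3pos : 0 < q3 := by rw [hq3def, real_inner_self_eq_norm_sq]; exact pow_pos (norm_pos_iff.mpr hu3ne) 2
  have hip_u3x1 : ⟪u3, x1⟫ = 0 := by rw [real_inner_comm]; exact horth13
  have hip_u3u2 : ⟪u3, u2⟫ = 0 := by rw [real_inner_comm]; exact horth23
  have hq1norm : q1 = ‖x1‖ ^ 2 := by rw [hq1def]; exact real_inner_self_eq_norm_sq x1
  have hq2le : q2 ≤ ‖x2‖ ^ 2 := by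
    have h2 : (⟪x2, x2⟫ : ℝ) = q2 + (⟪x1, x2⟫ / q1)^2 * q1 := by
      conv_lhs => rw [hx2eq]
      simp only [inner_add_left, inner_add_right, real_inner_smul_left, real_inner_smul_right,
        horth12, hip_u2x1, ← hq1def, ← hq2def]
      ring
    nlinarith only [h2, real_inner_self_eq_norm_sq x2, sq_nonneg (⟪x1, x2⟫ / q1), hq1pos]
  have hq3le : q3 ≤ ‖x3‖ ^ 2 := by
    have h2 : (⟪x3, x3⟫ : ℝ) = q3 + a31^2 * q1 + a32^2 * q2 := by
      conv_lhs => rw [hx3eq]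
      simp only [inner_add_left, inner_add_right, real_inner_smul_left, real_inner_smul_right,
        horth12, horth13, horth23, hip_u2x1, hip_u3x1, hip_u3u2, ← hq1def, ← hq2def, ← hq3def]
      ring
    nlinarith only [h2, real_inner_self_eq_norm_sq x3, sq_nonneg a31, sq_nonneg a32, hq1pos, hq2pos]
  have hip_u3x3 : ⟪u3, x3⟫ = q3 := by
    conv_lhs => rw [hx3eq]
    simp only [inner_add_right, real_inner_smul_right, hip_u3x1, hip_u3u2, ← hq3def]
    ring
  have hip_u3x2 : ⟪u3, x2⟫ = 0 := by
    conv_lhs => rw [hx2eq]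
    simp only [inner_add_right, real_inner_smul_right, hip_u3u2, hip_u3x1]
    ring
  have hip_u2x2 : ⟪u2, x2⟫ = q2 := by
    conv_lhs => rw [hx2eq]
    simp only [inner_add_right, real_inner_smul_right, hip_u2x1, ← hq2def]
    ring
  have hinnerP : ∀ p ∈ P, ⟪u3, p⟫ = 0 := by
    rw [hP]
    apply inner_eq_zero_of_mem_span
    rintro x (rfl | rfl)
    · exact hip_u3x1
    · exact hip_u3x2
  have hinnerL1 : ∀ p ∈ L1, ⟪u2, p⟫ = 0 := by
    rw [hL1]
    apply inner_eq_zero_of_mem_span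
    rintro x rfl
    exact hip_u2x1
  -- the key claim: every lattice vector lies in the ℤ-span of x1, x2, x3
  have key : ∀ y ∈ Λ, y ∈ Submodule.span ℤ ({x1, x2, x3} : Set (EuclideanSpace ℝ (Fin N))) := by
    intro y hy
    have hx1mem : x1 ∈ Submodule.span ℤ ({x1, x2, x3} : Set (EuclideanSpace ℝ (Fin N))) :=
      Submodule.subset_span (Or.inl rfl)
    have hx2mem : x2 ∈ Submodule.span ℤ ({x1, x2, x3} : Set (EuclideanSpace ℝ (Fin N))) :=
      Submodule.subset_span (Or.inr (Or.inl rfl))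
    have hx3mem : x3 ∈ Submodule.span ℤ ({x1, x2, x3} : Set (EuclideanSpace ℝ (Fin N))) :=
      Submodule.subset_span (Or.inr (Or.inr rfl))
    set n3 : ℤ := round (⟪u3, y⟫ / q3) with hn3def
    set z0 : EuclideanSpace ℝ (Fin N) := y - (n3 : ℝ) • x3 with hz0def
    set n2 : ℤ := round (⟪u2, z0⟫ / q2) with hn2def
    set z1 : EuclideanSpace ℝ (Fin N) := z0 - (n2 : ℝ) • x2 with hz1def
    set n1 : ℤ := round (⟪x1, z1⟫ / q1) with hn1def
    set z : EuclideanSpace ℝ (Fin N) := z1 - (n1 : ℝ) • x1 with hzdef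
    have hzΛ : z ∈ Λ := by
      rw [hzdef, hz1def, hz0def, Int.cast_smul_eq_zsmul, Int.cast_smul_eq_zsmul,
        Int.cast_smul_eq_zsmul]
      exact sub_mem (sub_mem (sub_mem hy (Submodule.smul_mem _ _ hx3Λ))
        (Submodule.smul_mem _ _ hx2Λ)) (Submodule.smul_mem _ _ hx1Λ)
    have hiz3 : ⟪u3, z⟫ = ⟪u3, y⟫ - (n3 : ℝ) * q3 := by
      rw [hzdef, hz1def, hz0def]
      simp only [inner_sub_right, real_inner_smul_right, hip_u3x3, hip_u3x2, hip_u3x1]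
      ring
    have hiz2 : ⟪u2, z⟫ = ⟪u2, z0⟫ - (n2 : ℝ) * q2 := by
      rw [hzdef, hz1def]
      simp only [inner_sub_right, real_inner_smul_right, hip_u2x2, hip_u2x1]
      ring
    have hiz1 : ⟪x1, z⟫ = ⟪x1, z1⟫ - (n1 : ℝ) * q1 := by
      rw [hzdef]
      simp only [inner_sub_right, real_inner_smul_right, ← hq1def]
    have hrb3 : |⟪u3, z⟫| ≤ q3 / 2 := by
      rw [hiz3]
      have heq : ⟪u3, y⟫ - (n3 : ℝ) * q3 = (⟪u3, y⟫ / q3 - (n3 : ℝ)) * q3 := by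
        rw [sub_mul, div_mul_cancel₀ _ (ne_of_gt hq3pos)]
      rw [heq, abs_mul, abs_of_pos hq3pos]
      have h := abs_sub_round (⟪u3, y⟫ / q3)
      rw [hn3def]
      nlinarith only [h, hq3pos]
    have hrb2 : |⟪u2, z⟫| ≤ q2 / 2 := by
      rw [hiz2]
      have heq : ⟪u2, z0⟫ - (n2 : ℝ) * q2 = (⟪u2, z0⟫ / q2 - (n2 : ℝ)) * q2 := by
        rw [sub_mul, div_mul_cancel₀ _ (ne_of_gt hq2pos)]
      rw [heq, abs_mul, abs_of_pos hq2pos]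
      have h := abs_sub_round (⟪u2, z0⟫ / q2)
      rw [hn2def]
      nlinarith only [h, hq2pos]
    have hrb1 : |⟪x1, z⟫| ≤ q1 / 2 := by
      rw [hiz1]
      have heq : ⟪x1, z1⟫ - (n1 : ℝ) * q1 = (⟪x1, z1⟫ / q1 - (n1 : ℝ)) * q1 := by
        rw [sub_mul, div_mul_cancel₀ _ (ne_of_gt hq1pos)]
      rw [heq, abs_mul, abs_of_pos hq1pos]
      have h := abs_sub_round (⟪x1, z1⟫ / q1)
      rw [hn1def]
      nlinarith only [h, hq1pos]
    obtain ⟨γ, hγ⟩ := hVcoord z hzΛ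
    set A : ℝ := γ 0 + γ 1 * (⟪x1, x2⟫ / q1) + γ 2 * a31 with hAdef
    set B : ℝ := γ 1 + γ 2 * a32 with hBdef
    set C : ℝ := γ 2 with hCdef
    have hzu : z = A • x1 + B • u2 + C • u3 := by
      rw [← hγ]
      conv_lhs => rw [hx2eq, hx3eq]
      rw [hAdef, hBdef, hCdef]
      module
    have hiz3' : ⟪u3, z⟫ = C * q3 := by
      rw [hzu]
      simp only [inner_add_right, real_inner_smul_right, hip_u3x1, hip_u3u2, ← hq3def]
      ring
    have hiz2' : ⟪u2, z⟫ = B * q2 := by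
      rw [hzu]
      simp only [inner_add_right, real_inner_smul_right, hip_u2x1, horth23, ← hq2def]
      ring
    have hiz1' : ⟪x1, z⟫ = A * q1 := by
      rw [hzu]
      simp only [inner_add_right, real_inner_smul_right, horth12, horth13, ← hq1def]
      ring
    have hznorm : ‖z‖ ^ 2 = A^2 * q1 + B^2 * q2 + C^2 * q3 := by
      rw [← real_inner_self_eq_norm_sq]
      conv_lhs => rw [hzu]
      simp only [inner_add_left, inner_add_right, real_inner_smul_left, real_inner_smul_right,
        horth12, horth13, horth23, hip_u2x1, hip_u3x1, hip_u3u2, ← hq1def, ← hq2def, ← hq3def]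
      ring
    have hA2 : A^2 * q1 ≤ q1 / 4 := by
      have h := hrb1
      rw [hiz1', abs_mul, abs_of_pos hq1pos] at h
      have hAabs : |A| ≤ 1/2 := by
        apply le_of_mul_le_mul_right _ hq1pos
        linarith only [h]
      have hsqA : A^2 ≤ 1/4 := by
        have hp := pow_le_pow_left₀ (abs_nonneg A) hAabs 2
        rw [sq_abs] at hp
        calc A^2 ≤ (1/2:ℝ)^2 := hp
          _ = 1/4 := by norm_num
      have := mul_le_mul_of_nonneg_right hsqA (le_of_lt hq1pos)
      linarith only [this]
    have hB2 : B^2 * q2 ≤ q2 / 4 := by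
      have h := hrb2
      rw [hiz2', abs_mul, abs_of_pos hq2pos] at h
      have hBabs : |B| ≤ 1/2 := by
        apply le_of_mul_le_mul_right _ hq2pos
        linarith only [h]
      have hsqB : B^2 ≤ 1/4 := by
        have hp := pow_le_pow_left₀ (abs_nonneg B) hBabs 2
        rw [sq_abs] at hp
        calc B^2 ≤ (1/2:ℝ)^2 := hp
          _ = 1/4 := by norm_num
      have := mul_le_mul_of_nonneg_right hsqB (le_of_lt hq2pos)
      linarith only [this]
    have hC2 : C^2 * q3 ≤ q3 / 4 := by
      have h := hrb3
      rw [hiz3', abs_mul, abs_of_pos hq3pos] at h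
      have hCabs : |C| ≤ 1/2 := by
        apply le_of_mul_le_mul_right _ hq3pos
        linarith only [h]
      have hsqC : C^2 ≤ 1/4 := by
        have hp := pow_le_pow_left₀ (abs_nonneg C) hCabs 2
        rw [sq_abs] at hp
        calc C^2 ≤ (1/2:ℝ)^2 := hp
          _ = 1/4 := by norm_num
      have := mul_le_mul_of_nonneg_right hsqC (le_of_lt hq3pos)
      linarith only [this]
    have hCzero : C = 0 := by
      by_contra hCne
      have hzP : z ∉ P := by
        intro h
        have h0 := hinnerP z h
        rw [hiz3'] at h0
        exact hCne ((mul_eq_zero.mp h0).resolve_right (ne_of_gt hq3pos))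
      have hzge : ‖x3‖ ≤ ‖z‖ := hmin3 z hzΛ hzP
      have hzle : ‖z‖^2 ≤ q1/4 + q2/4 + q3/4 := by rw [hznorm]; linarith only [hA2, hB2, hC2]
      have hq1le3 : q1 ≤ ‖x3‖^2 := by
        rw [hq1norm]; exact pow_le_pow_left₀ (norm_nonneg x1) hn13 2
      have hq2le3 : q2 ≤ ‖x3‖^2 := hq2le.trans (pow_le_pow_left₀ (norm_nonneg x2) hn23 2)
      have hx3pos : 0 < ‖x3‖ := norm_pos_iff.mpr hx3ne
      have hsq : ‖x3‖^2 ≤ ‖z‖^2 := pow_le_pow_left₀ (norm_nonneg x3) hzge 2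
      linarith only [hsq, hzle, hq1le3, hq2le3, hq3le, pow_pos hx3pos 2]
    have hBzero : B = 0 := by
      by_contra hBne
      have hzL1 : z ∉ L1 := by
        intro h
        have h0 := hinnerL1 z h
        rw [hiz2'] at h0
        exact hBne ((mul_eq_zero.mp h0).resolve_right (ne_of_gt hq2pos))
      have hzge : ‖x2‖ ≤ ‖z‖ := hmin2 z hzΛ hzL1
      have hzle : ‖z‖^2 ≤ q1/4 + q2/4 := by
        rw [hznorm, hCzero]
        linarith only [hA2, hB2]
      have hq1le2 : q1 ≤ ‖x2‖^2 := by
        rw [hq1norm]; exact pow_le_pow_left₀ (norm_nonneg x1) hn12 2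
      have hx2pos : 0 < ‖x2‖ := norm_pos_iff.mpr hx2ne
      have hsq : ‖x2‖^2 ≤ ‖z‖^2 := pow_le_pow_left₀ (norm_nonneg x2) hzge 2
      linarith only [hsq, hzle, hq1le2, hq2le, pow_pos hx2pos 2]
    have hAzero : A = 0 := by
      by_contra hAne
      have hzne : z ≠ 0 := by
        intro h
        rw [h, inner_zero_right] at hiz1'
        exact hAne (by
          have := hiz1'.symm
          exact (mul_eq_zero.mp this).resolve_right (ne_of_gt hq1pos))
      have hzge : ‖x1‖ ≤ ‖z‖ := hmin1 z hzΛ hzne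
      have hzle : ‖z‖^2 ≤ q1/4 := by
        rw [hznorm, hCzero, hBzero]
        linarith only [hA2]
      have hx1pos : 0 < ‖x1‖ := norm_pos_iff.mpr hx1ne
      have hsq : ‖x1‖^2 ≤ ‖z‖^2 := pow_le_pow_left₀ (norm_nonneg x1) hzge 2
      linarith only [hsq, hzle, hq1norm, pow_pos hx1pos 2]
    have hz0 : z = 0 := by rw [hzu, hAzero, hBzero, hCzero]; simp
    have hyeq : y = z + (n1 : ℝ) • x1 + (n2 : ℝ) • x2 + (n3 : ℝ) • x3 := by
      rw [hzdef, hz1def, hz0def]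
      abel
    rw [hyeq, hz0, zero_add, Int.cast_smul_eq_zsmul, Int.cast_smul_eq_zsmul,
      Int.cast_smul_eq_zsmul]
    exact add_mem (add_mem (Submodule.smul_mem _ _ hx1mem) (Submodule.smul_mem _ _ hx2mem))
      (Submodule.smul_mem _ _ hx3mem)
  have hspan : Submodule.span ℤ ({x1, x2, x3} : Set (EuclideanSpace ℝ (Fin N))) = Λ := by
    apply le_antisymm
    · rw [Submodule.span_le]
      rintro v (rfl | rfl | rfl)
      · exact hx1Λ
      · exact hx2Λ
      · exact hx3Λ
    · intro y hy
      exact key y hy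
  -- inner product bounds
  have hx1L1 : x1 ∈ L1 := by rw [hL1]; exact Submodule.mem_span_singleton_self x1
  have hsub12 : 2 * ⟪x1, x2⟫ ≤ ‖x1‖^2 := by
    have hmem : x2 - x1 ∈ Λ := sub_mem hx2Λ hx1Λ
    have hnot : x2 - x1 ∉ L1 := by
      intro h
      apply hx2L1
      have := add_mem h hx1L1
      simpa using this
    have h := hmin2 _ hmem hnot
    have hsq : ‖x2‖^2 ≤ ‖x2 - x1‖^2 := pow_le_pow_left₀ (norm_nonneg x2) h 2
    rw [norm_sub_sq_real] at hsq
    have hc : ⟪x2, x1⟫ = ⟪x1, x2⟫ := real_inner_comm x1 x2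
    linarith only [hsq, hc]
  have hsub13 : 2 * ⟪x1, x3⟫ ≤ ‖x1‖^2 := by
    have hmem : x3 - x1 ∈ Λ := sub_mem hx3Λ hx1Λ
    have hnot : x3 - x1 ∉ P := by
      intro h
      apply hx3P
      have := add_mem h hx1P
      simpa using this
    have h := hmin3 _ hmem hnot
    have hsq : ‖x3‖^2 ≤ ‖x3 - x1‖^2 := pow_le_pow_left₀ (norm_nonneg x3) h 2
    rw [norm_sub_sq_real] at hsq
    have hc : ⟪x3, x1⟫ = ⟪x1, x3⟫ := real_inner_comm x1 x3
    linarith only [hsq, hc]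
  have hsub23 : 2 * ⟪x2, x3⟫ ≤ ‖x2‖^2 := by
    have hmem : x3 - x2 ∈ Λ := sub_mem hx3Λ hx2Λ
    have hnot : x3 - x2 ∉ P := by
      intro h
      apply hx3P
      have := add_mem h hx2P
      simpa using this
    have h := hmin3 _ hmem hnot
    have hsq : ‖x3‖^2 ≤ ‖x3 - x2‖^2 := pow_le_pow_left₀ (norm_nonneg x3) h 2
    rw [norm_sub_sq_real] at hsq
    have hc : ⟪x3, x2⟫ = ⟪x2, x3⟫ := real_inner_comm x2 x3
    linarith only [hsq, hc]
  have hadd23 : -(‖x2‖^2) ≤ 2 * ⟪x2, x3⟫ := by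
    have hmem : x3 + x2 ∈ Λ := add_mem hx3Λ hx2Λ
    have hnot : x3 + x2 ∉ P := by
      intro h
      apply hx3P
      have := sub_mem h hx2P
      simpa using this
    have h := hmin3 _ hmem hnot
    have hsq : ‖x3‖^2 ≤ ‖x3 + x2‖^2 := pow_le_pow_left₀ (norm_nonneg x3) h 2
    rw [norm_add_sq_real] at hsq
    have hc : ⟪x3, x2⟫ = ⟪x2, x3⟫ := real_inner_comm x2 x3
    linarith only [hsq, hc]
  -- angle facts
  have harccos_half : Real.arccos (1/2) = π / 3 := by
    apply Real.arccos_eq_of_eq_cos (by positivity) (by linarith [Real.pi_pos])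
    rw [Real.cos_pi_div_three]
  have harccos_anti : ∀ s t : ℝ, s ≤ t → Real.arccos t ≤ Real.arccos s := by
    intro s t h
    simp only [Real.arccos]
    have := Real.monotone_arcsin h
    linarith
  have hx1pos : 0 < ‖x1‖ := norm_pos_iff.mpr hx1ne
  have hx2pos : 0 < ‖x2‖ := norm_pos_iff.mpr hx2ne
  have hx3pos : 0 < ‖x3‖ := norm_pos_iff.mpr hx3ne
  have hang12 : angle x1 x2 = Real.arccos (⟪x1, x2⟫ / (‖x1‖ * ‖x2‖)) := rfl
  have hang13 : angle x1 x3 = Real.arccos (⟪x1, x3⟫ / (‖x1‖ * ‖x3‖)) := rfl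
  have hang23 : angle x2 x3 = Real.arccos (⟪x2, x3⟫ / (‖x2‖ * ‖x3‖)) := rfl
  have ht12 : ⟪x1, x2⟫ / (‖x1‖ * ‖x2‖) ≤ 1/2 := by
    rw [div_le_iff₀ (by positivity)]
    have h := mul_le_mul_of_nonneg_left hn12 (norm_nonneg x1)
    linarith only [hsub12, h]
  have ht12' : 0 ≤ ⟪x1, x2⟫ / (‖x1‖ * ‖x2‖) := div_nonneg hip12 (by positivity)
  have ht13 : ⟪x1, x3⟫ / (‖x1‖ * ‖x3‖) ≤ 1/2 := by
    rw [div_le_iff₀ (by positivity)]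
    have h := mul_le_mul_of_nonneg_left hn13 (norm_nonneg x1)
    linarith only [hsub13, h]
  have ht13' : 0 ≤ ⟪x1, x3⟫ / (‖x1‖ * ‖x3‖) := div_nonneg hip13 (by positivity)
  have ht23 : ⟪x2, x3⟫ / (‖x2‖ * ‖x3‖) ≤ 1/2 := by
    rw [div_le_iff₀ (by positivity)]
    have h := mul_le_mul_of_nonneg_left hn23 (norm_nonneg x2)
    linarith only [hsub23, h]
  have ht23' : -(1/2) ≤ ⟪x2, x3⟫ / (‖x2‖ * ‖x3‖) := by
    rw [le_div_iff₀ (by positivity)]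
    have h := mul_le_mul_of_nonneg_left hn23 (norm_nonneg x2)
    linarith only [hadd23, h]
  refine ⟨x1, hx1Λ, x2, hx2Λ, x3, hx3Λ, hli3, hspan, hlam1.symm, hlam2.symm, hlam3.symm,
    ?_, ?_, ?_, ?_, ?_, ?_⟩
  · rw [hang12, ← harccos_half]
    exact harccos_anti _ _ ht12
  · rw [hang12]
    exact Real.arccos_le_pi_div_two.mpr ht12'
  · rw [hang13, ← harccos_half]
    exact harccos_anti _ _ ht13
  · rw [hang13]
    exact Real.arccos_le_pi_div_two.mpr ht13'
  · rw [hang23, ← harccos_half]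
    exact harccos_anti _ _ ht23
  · rw [hang23]
    have h2 : Real.arccos (-(1/2)) = 2 * π / 3 := by
      rw [Real.arccos_neg, harccos_half]
      ring
    rw [← h2]
    exact harccos_anti _ _ ht23'
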